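/- Among all trees on n ≥ 2 vertices, the star K_{1,n-1} is the unique (up to isomorphism) tree maximizing the largest Laplacian eigenvalue. -/

import Mathlib

open SimpleGraph Finset Matrix

/-- The degree of vertex `v`: the number of its neighbors. -/
noncomputable def gdeg {V : Type*} (G : SimpleGraph V) (v : V) : ℕ :=
  (G.neighborSet v).ncard

open scoped Classical in
/-- The Laplacian matrix `L = D - A` of a graph, with real entries. -/
noncomputable def lap {V : Type*} [Fintype V] [DecidableEq V] (G : SimpleGraph V) :
    Matrix V V ℝ :=
  Matrix.of fun u v =>
    (if u = v then (gdeg G u : ℝ) else 0) - (if G.Adj u v then 1 else 0)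

/-- `lam` is the largest Laplacian eigenvalue of `G`. -/
def IsMaxEig {V : Type*} [Fintype V] [DecidableEq V] (G : SimpleGraph V) (lam : ℝ) : Prop :=
  IsGreatest {μ : ℝ | ∃ f : V → ℝ, f ≠ 0 ∧ (lap G).mulVec f = μ • f} lam

set_option linter.unusedSectionVars false

section Aux

open scoped Classical

variable {V : Type*} [Fintype V] [DecidableEq V]

lemma gdeg_eq_sum (G : SimpleGraph V) (u : V) :
    (gdeg G u : ℝ) = ∑ v, if G.Adj u v then (1:ℝ) else 0 := by
  rw [Finset.sum_boole]
  congr 1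
  rw [gdeg, Set.ncard_eq_toFinset_card']
  congr 1
  ext v
  rw [Set.mem_toFinset]
  simp [neighborSet]

lemma lap_apply (G : SimpleGraph V) (u v : V) :
    lap G u v = (if u = v then (gdeg G u : ℝ) else 0) - (if G.Adj u v then 1 else 0) := by
  simp [lap]

lemma lap_symm (G : SimpleGraph V) (u v : V) : lap G u v = lap G v u := by
  rw [lap_apply, lap_apply]
  by_cases h : u = v
  · subst h; simp
  · simp only [if_neg h, if_neg (Ne.symm h)]
    by_cases ha : G.Adj u v
    · rw [if_pos ha, if_pos ha.symm]
    · rw [if_neg ha, if_neg (fun h' => ha h'.symm)]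

lemma lap_row_sum (G : SimpleGraph V) (u : V) : ∑ v, lap G u v = 0 := by
  simp only [lap_apply, Finset.sum_sub_distrib]
  rw [Finset.sum_ite_eq univ u (fun _ => (gdeg G u : ℝ)), if_pos (mem_univ u),
    gdeg_eq_sum, sub_eq_zero, Finset.sum_boole]

lemma mulVec_lap (G : SimpleGraph V) (f : V → ℝ) (u : V) :
    (lap G).mulVec f u = (gdeg G u : ℝ) * f u - ∑ v, if G.Adj u v then f v else 0 := by
  simp only [mulVec, dotProduct, lap_apply, sub_mul, Finset.sum_sub_distrib]
  congr 1
  · simp only [ite_mul, zero_mul]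
    rw [Finset.sum_ite_eq univ u (fun x => (gdeg G u : ℝ) * f x), if_pos (mem_univ u)]
  · congr 1; ext v
    by_cases h : G.Adj u v <;> simp [h]

lemma dot_lap_eq (G : SimpleGraph V) (f : V → ℝ) :
    2 * (f ⬝ᵥ (lap G).mulVec f) = ∑ u, ∑ v, if G.Adj u v then (f u - f v)^2 else 0 := by
  have key : f ⬝ᵥ (lap G).mulVec f
      = ∑ u, ∑ v, (if G.Adj u v then (f u^2 - f u * f v) else 0) := by
    simp only [dotProduct]
    refine Finset.sum_congr rfl fun u _ => ?_
    rw [mulVec_lap, mul_sub, Finset.mul_sum]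
    have hdeg : f u * ((gdeg G u : ℝ) * f u) = ∑ v, if G.Adj u v then f u ^ 2 else 0 := by
      rw [gdeg_eq_sum, Finset.sum_mul, Finset.mul_sum]
      refine Finset.sum_congr rfl fun v _ => ?_
      by_cases h : G.Adj u v <;> simp [h] <;> ring
    rw [hdeg, ← Finset.sum_sub_distrib]
    refine Finset.sum_congr rfl fun v _ => ?_
    by_cases h : G.Adj u v <;> simp [h]
  have swap : ∑ u, ∑ v, (if G.Adj u v then f v^2 else 0)
      = ∑ u, ∑ v, (if G.Adj u v then f u^2 else 0) := by
    rw [Finset.sum_comm]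
    refine Finset.sum_congr rfl fun u _ => Finset.sum_congr rfl fun v _ => ?_
    by_cases h : G.Adj u v
    · rw [if_pos h, if_pos h.symm]
    · rw [if_neg h, if_neg (fun h' => h h'.symm)]
  have expand : ∑ u, ∑ v, (if G.Adj u v then (f u - f v)^2 else 0)
      = (∑ u, ∑ v, if G.Adj u v then f u^2 else 0)
        + (∑ u, ∑ v, if G.Adj u v then f v^2 else 0)
        - 2 * ∑ u, ∑ v, (if G.Adj u v then f u * f v else 0) := by
    rw [Finset.mul_sum, ← Finset.sum_add_distrib, ← Finset.sum_sub_distrib]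
    refine Finset.sum_congr rfl fun u _ => ?_
    rw [Finset.mul_sum, ← Finset.sum_add_distrib, ← Finset.sum_sub_distrib]
    refine Finset.sum_congr rfl fun v _ => ?_
    by_cases h : G.Adj u v <;> simp [h] <;> ring
  have split : ∑ u, ∑ v, (if G.Adj u v then (f u^2 - f u * f v) else 0)
      = (∑ u, ∑ v, if G.Adj u v then f u^2 else 0)
        - ∑ u, ∑ v, (if G.Adj u v then f u * f v else 0) := by
    rw [← Finset.sum_sub_distrib]
    refine Finset.sum_congr rfl fun u _ => ?_
    rw [← Finset.sum_sub_distrib]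
    refine Finset.sum_congr rfl fun v _ => ?_
    by_cases h : G.Adj u v <;> simp [h]
  rw [key, split, expand, swap]
  ring

lemma dot_lap_nonneg (G : SimpleGraph V) (f : V → ℝ) : 0 ≤ f ⬝ᵥ (lap G).mulVec f := by
  have h : (0:ℝ) ≤ ∑ u, ∑ v, (if G.Adj u v then (f u - f v)^2 else 0) :=
    Finset.sum_nonneg fun u _ => Finset.sum_nonneg fun v _ => by split <;> positivity
  linarith [dot_lap_eq G f]

lemma dot_lap_zero (G : SimpleGraph V) (f : V → ℝ) (h : f ⬝ᵥ (lap G).mulVec f = 0)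
    {u v : V} (huv : G.Adj u v) : f u = f v := by
  have h2 : ∑ u, ∑ v, (if G.Adj u v then (f u - f v)^2 else 0) = 0 := by
    rw [← dot_lap_eq, h]; ring
  have hnn : ∀ u ∈ (univ : Finset V), (0:ℝ) ≤ ∑ v, (if G.Adj u v then (f u - f v)^2 else 0) :=
    fun u _ => Finset.sum_nonneg fun v _ => by split <;> positivity
  have h3 := (Finset.sum_eq_zero_iff_of_nonneg hnn).1 h2 u (mem_univ u)
  have h4 := (Finset.sum_eq_zero_iff_of_nonneg
    (fun v _ => by split <;> positivity)).1 h3 v (mem_univ v)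
  rw [if_pos huv] at h4
  have := sq_eq_zero_iff.1 h4
  linarith

lemma reach_const (G : SimpleGraph V) (f : V → ℝ) (h : f ⬝ᵥ (lap G).mulVec f = 0)
    {u v : V} (hr : G.Reachable u v) : f u = f v := by
  obtain ⟨p⟩ := hr
  induction p with
  | nil => rfl
  | cons ha _ ih => exact (dot_lap_zero G f h ha).trans ih

lemma lap_add_compl (G : SimpleGraph V) (u v : V) :
    lap G u v + lap Gᶜ u v = (Fintype.card V : ℝ) * (if u = v then 1 else 0) - 1 := by
  have hdegn : gdeg G u + gdeg Gᶜ u = Fintype.card V - 1 := by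
    rw [gdeg, gdeg, ← Set.ncard_union_eq (G.compl_neighborSet_disjoint u)
      (Set.toFinite _) (Set.toFinite _), G.neighborSet_union_compl_neighborSet_eq u]
    rw [Set.ncard_eq_toFinset_card', Set.toFinset_compl, Set.toFinset_singleton,
      Finset.card_compl, Finset.card_singleton]
  have hdeg : (gdeg G u : ℝ) + (gdeg Gᶜ u : ℝ) = (Fintype.card V : ℝ) - 1 := by
    have h1 : 1 ≤ Fintype.card V := @Fintype.card_pos V _ ⟨u⟩
    have := congrArg (Nat.cast (R := ℝ)) hdegn
    push_cast [Nat.cast_sub h1] at this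
    linarith
  rw [lap_apply, lap_apply]
  by_cases he : u = v
  · subst he
    rw [if_pos rfl, if_pos rfl, if_pos rfl, if_neg (G.irrefl), if_neg (Gᶜ.irrefl), mul_one]
    linarith
  · simp only [if_neg he, mul_zero, zero_sub]
    by_cases ha : G.Adj u v
    · have h2 : ¬ Gᶜ.Adj u v := by simp [compl_adj, ha]
      simp [ha, h2]
    · have h2 : Gᶜ.Adj u v := by simp [compl_adj, he, ha]
      simp [ha, h2]

lemma lap_col_sum (G : SimpleGraph V) (v : V) : ∑ u, lap G u v = 0 := by
  rw [Finset.sum_congr rfl fun u _ => lap_symm G u v, lap_row_sum]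

lemma eigen_sum_zero (G : SimpleGraph V) (f : V → ℝ) (μ : ℝ)
    (hf : (lap G).mulVec f = μ • f) (hμ : μ ≠ 0) : ∑ v, f v = 0 := by
  have h1 : ∑ u, (lap G).mulVec f u = μ * ∑ v, f v := by
    rw [hf]; simp [Finset.mul_sum]
  have h2 : ∑ u, (lap G).mulVec f u = 0 := by
    simp only [mulVec, dotProduct]
    rw [Finset.sum_comm]
    refine Finset.sum_eq_zero fun v _ => ?_
    rw [← Finset.sum_mul, lap_col_sum, zero_mul]
  rw [h2] at h1
  exact (mul_eq_zero.1 h1.symm).resolve_left hμ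

lemma mulVec_compl (G : SimpleGraph V) (f : V → ℝ) (hsum : ∑ v, f v = 0) (u : V) :
    (lap G).mulVec f u + (lap Gᶜ).mulVec f u = (Fintype.card V : ℝ) * f u := by
  simp only [mulVec, dotProduct]
  rw [← Finset.sum_add_distrib]
  rw [Finset.sum_congr rfl fun v _ => by rw [← add_mul, lap_add_compl]]
  simp only [sub_mul, one_mul, Finset.sum_sub_distrib, mul_ite, mul_one, mul_zero,
    ite_mul, zero_mul]
  rw [Finset.sum_ite_eq univ u (fun v => (Fintype.card V : ℝ) * f v), if_pos (mem_univ u),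
    hsum]
  ring

lemma eigen_le_card (G : SimpleGraph V) (f : V → ℝ) (μ : ℝ)
    (hf0 : f ≠ 0) (hf : (lap G).mulVec f = μ • f) : μ ≤ Fintype.card V := by
  by_cases hμ : μ = 0
  · subst hμ; positivity
  have hsum := eigen_sum_zero G f μ hf hμ
  have hcompl : (lap Gᶜ).mulVec f = fun u => (Fintype.card V : ℝ) * f u - μ * f u := by
    funext u
    have h1 := mulVec_compl G f hsum u
    have h2 : (lap G).mulVec f u = μ * f u := by rw [hf]; rfl
    linarith
  have hpos : 0 < ∑ v, f v ^ 2 := by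
    obtain ⟨u, hu⟩ := Function.ne_iff.1 hf0
    refine Finset.sum_pos' (fun v _ => by positivity) ⟨u, mem_univ u,
      lt_of_le_of_ne (sq_nonneg _) (Ne.symm (pow_ne_zero 2 hu))⟩
  have hdot : f ⬝ᵥ (lap Gᶜ).mulVec f = ((Fintype.card V : ℝ) - μ) * ∑ v, f v ^ 2 := by
    rw [hcompl]
    simp only [dotProduct, Finset.mul_sum]
    refine Finset.sum_congr rfl fun v _ => by ring
  have := dot_lap_nonneg Gᶜ f
  rw [hdot] at this
  nlinarith

def IsStar (G : SimpleGraph V) (c : V) : Prop :=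
  ∀ u v, G.Adj u v ↔ u ≠ v ∧ (u = c ∨ v = c)

lemma ncard_compl_singleton (c : V) : ({c}ᶜ : Set V).ncard = Fintype.card V - 1 := by
  rw [Set.ncard_eq_toFinset_card', Set.toFinset_compl, Set.toFinset_singleton,
    Finset.card_compl, Finset.card_singleton]

lemma gdeg_star_center {G : SimpleGraph V} {c : V} (hs : IsStar G c) :
    gdeg G c = Fintype.card V - 1 := by
  rw [gdeg]
  have : G.neighborSet c = {c}ᶜ := by
    ext v
    rw [mem_neighborSet, hs c v, Set.mem_compl_iff, Set.mem_singleton_iff]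
    constructor
    · rintro ⟨h1, _⟩ h2; exact h1 h2.symm
    · intro h; exact ⟨fun h' => h h'.symm, Or.inl rfl⟩
  rw [this, ncard_compl_singleton]

lemma gdeg_star_leaf {G : SimpleGraph V} {c u : V} (hs : IsStar G c) (hu : u ≠ c) :
    gdeg G u = 1 := by
  rw [gdeg]
  have : G.neighborSet u = {c} := by
    ext v
    rw [mem_neighborSet, hs u v, Set.mem_singleton_iff]
    constructor
    · rintro ⟨h1, h2 | h2⟩
      · exact absurd h2 hu
      · exact h2
    · rintro rfl; exact ⟨hu, Or.inr rfl⟩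
  rw [this, Set.ncard_singleton]

lemma star_eigen {G : SimpleGraph V} {c : V} (hs : IsStar G c) (hn : 2 ≤ Fintype.card V) :
    ∃ f : V → ℝ, f ≠ 0 ∧ (lap G).mulVec f = (Fintype.card V : ℝ) • f := by
  set n : ℕ := Fintype.card V with hn'
  refine ⟨fun u => if u = c then (n : ℝ) - 1 else -1, ?_, ?_⟩
  · intro h
    have h1 : ((n:ℝ) - 1) = 0 := by simpa using congrFun h c
    have h2 : (2:ℝ) ≤ (n:ℝ) := by exact_mod_cast hn
    linarith
  · funext u
    rw [mulVec_lap]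
    by_cases hu : u = c
    · subst hu
      rw [gdeg_star_center hs]
      have hsum : ∑ v, (if G.Adj u v then (if v = u then (n:ℝ) - 1 else -1) else 0)
          = ∑ v, (if v = u then (0:ℝ) else -1) := by
        refine Finset.sum_congr rfl fun v _ => ?_
        by_cases hv : v = u
        · subst hv
          rw [if_neg (G.irrefl), if_pos rfl]
        · have hadj : G.Adj u v := (hs u v).2 ⟨fun h => hv h.symm, Or.inl rfl⟩
          rw [if_pos hadj, if_neg hv, if_neg hv]
      have hsum2 : ∑ v, (if v = u then (0:ℝ) else -1) = -(n:ℝ) + 1 := by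
        have : ∀ v, (if v = u then (0:ℝ) else -1) = -1 + (if v = u then (1:ℝ) else 0) := by
          intro v; by_cases hv : v = u <;> simp [hv]
        rw [Finset.sum_congr rfl fun v _ => this v, Finset.sum_add_distrib,
          Finset.sum_ite_eq' univ u (fun _ => (1:ℝ)), if_pos (mem_univ u)]
        simp [hn', Finset.card_univ]
      rw [hsum, hsum2]
      have h2 : (2:ℝ) ≤ (n:ℝ) := by exact_mod_cast hn
      have hcast : ((n - 1 : ℕ) : ℝ) = (n:ℝ) - 1 := by
        have : 1 ≤ n := le_trans one_le_two hn
        push_cast [Nat.cast_sub this]; ring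
      rw [hcast, if_pos rfl, Pi.smul_apply, smul_eq_mul, if_pos rfl]
      ring
    · rw [gdeg_star_leaf hs hu]
      have hsum : ∑ v, (if G.Adj u v then (if v = c then (n:ℝ) - 1 else -1) else 0)
          = ∑ v, (if v = c then (n:ℝ) - 1 else 0) := by
        refine Finset.sum_congr rfl fun v _ => ?_
        by_cases hv : v = c
        · subst hv
          have hadj : G.Adj u v := (hs u v).2 ⟨hu, Or.inr rfl⟩
          rw [if_pos hadj, if_pos rfl, if_pos rfl]
        · have hadj : ¬ G.Adj u v := by
            rw [hs u v]
            rintro ⟨h1, h2 | h2⟩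
            · exact hu h2
            · exact hv h2
          rw [if_neg hadj, if_neg hv]
      rw [hsum, Finset.sum_ite_eq' univ c (fun _ => (n:ℝ) - 1), if_pos (mem_univ c),
        if_neg hu]
      simp only [Pi.smul_apply, smul_eq_mul, if_neg hu]
      ring

lemma star_isMaxEig {G : SimpleGraph V} {c : V} (hs : IsStar G c) (hn : 2 ≤ Fintype.card V) :
    IsMaxEig G (Fintype.card V : ℝ) := by
  constructor
  · exact star_eigen hs hn
  · rintro μ ⟨f, hf0, hf⟩
    exact eigen_le_card G f μ hf0 hf

lemma star_isTree {G : SimpleGraph V} {c : V} (hs : IsStar G c) : G.IsTree := by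
  constructor
  · rw [connected_iff]
    refine ⟨fun u v => ?_, ⟨c⟩⟩
    have key : ∀ w, G.Reachable w c := by
      intro w
      by_cases hw : w = c
      · exact hw ▸ Reachable.refl w
      · exact ((hs w c).2 ⟨hw, Or.inr rfl⟩).reachable
    exact (key u).trans (key v).symm
  · rw [isAcyclic_iff_forall_adj_isBridge]
    intro v w hvw
    rw [isBridge_iff]
    have key : ∀ x, x ≠ c → ∀ y, ¬ (G \ fromEdgeSet {s(x, c)}).Adj x y := by
      intro x hx y hadj
      obtain ⟨h1, h2⟩ := hadj
      have hyc : y = c := by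
        rcases (hs x y).1 h1 with ⟨_, h | h⟩
        · exact absurd h hx
        · exact h
      subst hyc
      exact h2 (by simp [fromEdgeSet_adj, h1.ne])
    obtain ⟨hne, hc | hc⟩ := (hs v w).1 hvw
    · subst hc
      intro hr
      obtain ⟨p⟩ := hr.symm
      cases p with
      | nil => exact hne rfl
      | cons ha _ =>
        exact key w (fun h => hne h.symm) _ (by rwa [Sym2.eq_swap] at ha)
    · subst hc
      intro hr
      obtain ⟨p⟩ := hr
      cases p with
      | nil => exact hne rfl
      | cons ha _ => exact key v hne _ ha

lemma star_of_eigen {T : SimpleGraph V} (hT : T.IsTree) (hn : 2 ≤ Fintype.card V)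
    (f : V → ℝ) (hf0 : f ≠ 0) (hf : (lap T).mulVec f = (Fintype.card V : ℝ) • f) :
    ∃ c, IsStar T c := by
  set n := Fintype.card V with hn'
  have hnR : (2:ℝ) ≤ (n:ℝ) := by exact_mod_cast hn
  have hsum : ∑ v, f v = 0 := eigen_sum_zero T f _ hf (by linarith)
  have hTc : (lap Tᶜ).mulVec f = 0 := by
    funext u
    have h1 := mulVec_compl T f hsum u
    have h2 : (lap T).mulVec f u = (n:ℝ) * f u := by rw [hf]; rfl
    rw [h2] at h1
    simpa using by linarith
  have hdot : f ⬝ᵥ (lap Tᶜ).mulVec f = 0 := by rw [hTc]; simp [dotProduct]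
  obtain ⟨a, ha⟩ := Function.ne_iff.1 hf0
  simp only [Pi.zero_apply] at ha
  obtain ⟨b, hb⟩ : ∃ b, f b ≠ f a := by
    by_contra h
    push_neg at h
    have hs2 : ∑ v, f v = n * f a := by
      rw [Finset.sum_congr rfl fun v _ => h v]
      simp [hn', Finset.card_univ, mul_comm]
    rw [hsum] at hs2
    have : f a = 0 := by
      rcases mul_eq_zero.1 hs2.symm with h' | h'
      · exfalso; have : (n:ℝ) ≠ 0 := by linarith
        exact this h'
      · exact h'
    exact ha this
  have hreach : ¬ Tᶜ.Reachable a b := fun hr => hb (reach_const Tᶜ f hdot hr).symm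
  set A : Finset V := univ.filter (fun x => Tᶜ.Reachable a x) with hA
  have haA : a ∈ A := by
    simp only [hA, Finset.mem_filter, Finset.mem_univ, true_and]
    exact Reachable.refl a
  have hbA : b ∉ A := by simp [hA, hreach]
  have hadj : ∀ x ∈ A, ∀ y, y ∉ A → T.Adj x y := by
    intro x hx y hy
    have hxy : x ≠ y := fun h => hy (h ▸ hx)
    by_contra hna
    have hca : Tᶜ.Adj x y := by rw [compl_adj]; exact ⟨hxy, hna⟩
    refine hy ?_
    simp only [hA, Finset.mem_filter, Finset.mem_univ, true_and] at hx ⊢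
    exact hx.trans hca.reachable
  have hedges : T.edgeFinset.card + 1 = n := hT.card_edgeFinset
  have hcount : A.card * Aᶜ.card ≤ T.edgeFinset.card := by
    rw [← Finset.card_product]
    refine Finset.card_le_card_of_injOn (fun p => s(p.1, p.2)) ?_ ?_
    · rintro ⟨x, y⟩ hp
      rw [Finset.mem_coe, Finset.mem_product, Finset.mem_compl] at hp
      rw [Finset.mem_coe, mem_edgeFinset, mem_edgeSet]
      exact hadj x hp.1 y hp.2
    · rintro ⟨x, y⟩ hp ⟨x', y'⟩ hp' h
      simp only [Finset.coe_product, Set.mem_prod, Finset.mem_coe, Finset.mem_compl] at hp hp'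
      simp only [Sym2.eq_iff] at h
      rcases h with ⟨rfl, rfl⟩ | ⟨rfl, rfl⟩
      · rfl
      · exact absurd hp.1 hp'.2
  have hcards : A.card + Aᶜ.card = n := Finset.card_add_card_compl A
  have h1A : 1 ≤ A.card := Finset.card_pos.2 ⟨a, haA⟩
  have h1Ac : 1 ≤ Aᶜ.card := Finset.card_pos.2 ⟨b, Finset.mem_compl.2 hbA⟩
  have hone : A.card = 1 ∨ Aᶜ.card = 1 := by
    by_contra h
    push_neg at h
    have h2a : 2 ≤ A.card := by omega
    have h2b : 2 ≤ Aᶜ.card := by omega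
    nlinarith [hcount, hedges, hcards]
  obtain ⟨c, hc⟩ : ∃ c, ∀ y, y ≠ c → T.Adj c y := by
    rcases hone with h1 | h1
    · obtain ⟨c, hc⟩ := Finset.card_eq_one.1 h1
      refine ⟨c, fun y hy => ?_⟩
      refine hadj c (by simp [hc]) y fun hyA => hy ?_
      rw [hc, Finset.mem_singleton] at hyA
      exact hyA
    · obtain ⟨c, hc⟩ := Finset.card_eq_one.1 h1
      have hcA : c ∉ A := by
        rw [← Finset.mem_compl, hc]; exact Finset.mem_singleton_self c
      refine ⟨c, fun y hy => ?_⟩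
      have hyA : y ∈ A := by
        by_contra hyn
        rw [← Finset.mem_compl, hc, Finset.mem_singleton] at hyn
        exact hy hyn
      exact (hadj y hyA c hcA).symm
  have himg : (univ.erase c).image (fun y => s(y, c)) = T.edgeFinset := by
    refine Finset.eq_of_subset_of_card_le ?_ ?_
    · intro e he
      obtain ⟨y, hy, rfl⟩ := Finset.mem_image.1 he
      rw [Finset.mem_erase] at hy
      rw [mem_edgeFinset, mem_edgeSet]
      exact (hc y hy.1).symm
    · have hci : ((univ.erase c).image (fun y => s(y, c))).card = n - 1 := by
        rw [Finset.card_image_of_injOn, Finset.card_erase_of_mem (mem_univ c),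
          Finset.card_univ]
        intro x hx x' hx' h
        rw [Finset.mem_coe, Finset.mem_erase] at hx hx'
        simp only [Sym2.eq_iff] at h
        rcases h with ⟨rfl, _⟩ | ⟨h1, h2⟩
        · rfl
        · exact absurd h2.symm hx'.1
      omega
  refine ⟨c, fun u v => ⟨fun huv => ⟨huv.ne, ?_⟩, ?_⟩⟩
  · by_contra h
    push_neg at h
    obtain ⟨h1, h2⟩ := h
    have : s(u, v) ∈ T.edgeFinset := by rw [mem_edgeFinset, mem_edgeSet]; exact huv
    rw [← himg] at this
    obtain ⟨y, hy, he⟩ := Finset.mem_image.1 this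
    simp only [Sym2.eq_iff] at he
    rcases he with ⟨_, h4⟩ | ⟨_, h4⟩
    · exact h2 h4.symm
    · exact h1 h4.symm
  · rintro ⟨hne, rfl | rfl⟩
    · exact hc v (fun h => hne h.symm)
    · exact (hc u hne).symm

lemma isLeft_iff {α β : Type*} (x : α ⊕ β) : x.isLeft = true ↔ ∃ y, x = Sum.inl y := by
  cases x <;> simp

lemma iso_of_isStar {T : SimpleGraph V} {c : V} (hs : IsStar T c) {n : ℕ} (hn : 2 ≤ n)
    (hcard : Fintype.card V = n) :
    Nonempty (T ≃g completeBipartiteGraph (Fin 1) (Fin (n - 1))) := by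
  have e0 : {x : V // x = c} ≃ Fin 1 :=
    Fintype.equivFinOfCardEq (by rw [Fintype.card_subtype_eq])
  have e1 : {x : V // ¬ x = c} ≃ Fin (n - 1) :=
    Fintype.equivFinOfCardEq
      (by rw [Fintype.card_subtype_compl, Fintype.card_subtype_eq, hcard])
  let e : V ≃ Fin 1 ⊕ Fin (n - 1) :=
    (Equiv.sumCompl (· = c)).symm.trans (Equiv.sumCongr e0 e1)
  have key : ∀ u : V, (e u).isLeft = true ↔ u = c := by
    intro u
    by_cases h : u = c
    · simp only [e, Equiv.trans_apply, Equiv.sumCongr_apply]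
      rw [Equiv.sumCompl_symm_apply_of_pos (p := fun x => x = c) h]
      simp [h]
    · simp only [e, Equiv.trans_apply, Equiv.sumCongr_apply]
      rw [Equiv.sumCompl_symm_apply_of_neg (p := fun x => x = c) h]
      simp [h]
  have key2 : ∀ u : V, (e u).isRight = true ↔ ¬ u = c := by
    intro u
    rw [← key u]
    cases e u <;> simp
  refine ⟨⟨e, ?_⟩⟩
  intro u v
  show (completeBipartiteGraph (Fin 1) (Fin (n - 1))).Adj (e u) (e v) ↔ T.Adj u v
  rw [completeBipartiteGraph_adj, hs u v]
  constructor
  · rintro (⟨h1, h2⟩ | ⟨h1, h2⟩)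
    · have huc := (key u).1 h1
      have hvc := (key2 v).1 h2
      exact ⟨fun h => hvc (h.symm.trans huc), Or.inl huc⟩
    · have hunc := (key2 u).1 h1
      have hvc := (key v).1 h2
      exact ⟨fun h => hunc (h.trans hvc), Or.inr hvc⟩
  · rintro ⟨hne', huc | hvc⟩
    · exact Or.inl ⟨(key u).2 huc, (key2 v).2 (fun h => hne' (huc.trans h.symm))⟩
    · exact Or.inr ⟨(key2 u).2 (fun h => hne' (h.trans hvc.symm)), (key v).2 hvc⟩

lemma isStar_of_iso {T : SimpleGraph V} {n : ℕ}
    (φ : T ≃g completeBipartiteGraph (Fin 1) (Fin (n - 1))) : ∃ c, IsStar T c := by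
  set c := φ.symm (Sum.inl 0) with hc
  have key : ∀ u : V, (φ u).isLeft = true ↔ u = c := by
    intro u
    constructor
    · intro h
      obtain ⟨y, hy⟩ := (isLeft_iff _).1 h
      have hy0 : y = 0 := Subsingleton.elim y 0
      subst hy0
      have := congrArg φ.symm hy
      rw [RelIso.symm_apply_apply] at this
      exact this
    · rintro rfl
      rw [hc, RelIso.apply_symm_apply]
      simp
  have key2 : ∀ u : V, (φ u).isRight = true ↔ ¬ u = c := by
    intro u; rw [← key u]; cases (φ u) <;> simp
  refine ⟨c, fun u v => ?_⟩
  rw [← φ.map_adj_iff, completeBipartiteGraph_adj]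
  constructor
  · rintro (⟨h1, h2⟩ | ⟨h1, h2⟩)
    · have huc := (key u).1 h1
      have hvc := (key2 v).1 h2
      exact ⟨fun h => hvc (h.symm.trans huc), Or.inl huc⟩
    · have hunc := (key2 u).1 h1
      have hvc := (key v).1 h2
      exact ⟨fun h => hunc (h.trans hvc), Or.inr hvc⟩
  · rintro ⟨hne', huc | hvc⟩
    · exact Or.inl ⟨(key u).2 huc, (key2 v).2 (fun h => hne' (huc.trans h.symm))⟩
    · exact Or.inr ⟨(key2 u).2 (fun h => hne' (h.trans hvc.symm)), (key v).2 hvc⟩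

end Aux

/-- Among all trees on `n ≥ 2` vertices, the star `K_{1,n-1}` is the unique
(up to isomorphism) maximizer of the largest Laplacian eigenvalue. -/
theorem stmt14 {V : Type*} [Fintype V] [DecidableEq V] (n : ℕ) (hn : 2 ≤ n)
    (hcard : Fintype.card V = n) (T : SimpleGraph V) (hT : T.IsTree)
    (lam : ℝ) (hlam : IsMaxEig T lam) :
    (∀ T'' : SimpleGraph V, T''.IsTree → ∀ lam'' : ℝ, IsMaxEig T'' lam'' → lam'' ≤ lam)
      ↔ Nonempty (T ≃g completeBipartiteGraph (Fin 1) (Fin (n - 1))) := by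
  have hnV : 2 ≤ Fintype.card V := hcard ▸ hn
  constructor
  · intro hmax
    obtain ⟨c⟩ : Nonempty V := Fintype.card_pos_iff.1 (by omega)
    let S : SimpleGraph V :=
      { Adj := fun u v => u ≠ v ∧ (u = c ∨ v = c),
        symm := ⟨by rintro u v ⟨h1, h2⟩; exact ⟨h1.symm, h2.symm⟩⟩,
        loopless := ⟨by rintro u ⟨h1, _⟩; exact h1 rfl⟩ }
    have hS : IsStar S c := fun u v => Iff.rfl
    have h1 : (Fintype.card V : ℝ) ≤ lam :=
      hmax S (star_isTree hS) _ (star_isMaxEig hS hnV)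
    obtain ⟨f, hf0, hf⟩ := hlam.1
    have h2 : lam ≤ (Fintype.card V : ℝ) := eigen_le_card T f lam hf0 hf
    have hlamn : lam = (Fintype.card V : ℝ) := le_antisymm h2 h1
    rw [hlamn] at hf
    obtain ⟨c2, hstar⟩ := star_of_eigen hT hnV f hf0 hf
    exact iso_of_isStar hstar hn hcard
  · rintro ⟨φ⟩
    obtain ⟨c, hstar⟩ := isStar_of_iso φ
    intro T'' hT'' lam'' hlam''
    obtain ⟨f, hf0, hf⟩ := hlam''.1
    have h1 : lam'' ≤ (Fintype.card V : ℝ) := eigen_le_card T'' f lam'' hf0 hf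
    have h2 : (Fintype.card V : ℝ) ≤ lam := hlam.2 (star_isMaxEig hstar hnV).1
    linarith
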